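/- Let (a_n) be a nonincreasing interval-filling sequence. If (1+√3)·a_n ≤ r_n for all n, then both subsequences (a_{2n−1}) and (a_{2n}) are interval-filling; in particular a_n ≤ a_{n+2} + a_{n+4} + a_{n+6} + ⋯ for all n. -/
import Mathlib


open Set MeasureTheory Pointwise

/-- The achievement set (set of all subsums) of the series `∑ a n`. -/
noncomputable def achievementSet (a : ℕ → ℝ) : Set ℝ :=
  {x | ∃ I : Set ℕ, HasSum (fun i : I => a i) x}

/-- `tail a n` is the sum of the terms with index `≥ n`. -/
noncomputable def tail (a : ℕ → ℝ) (n : ℕ) : ℝ := ∑' i : ℕ, a (n + i)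

/-- The set of `k`-initial subsums: sums over subsets of the first `k` terms. -/
def Fset (a : ℕ → ℝ) (k : ℕ) : Set ℝ :=
  {x | ∃ I : Finset ℕ, I ⊆ Finset.range k ∧ x = ∑ i ∈ I, a i}

/-- The `k`-th iterate `I_k = ⋃_{f ∈ F_k} [f, f + r_k]`. -/
noncomputable def iter (a : ℕ → ℝ) (k : ℕ) : Set ℝ :=
  ⋃ f ∈ Fset a k, Set.Icc f (f + tail a k)

/-- A Cantor set: a nonempty compact perfect nowhere dense subset of `ℝ`. -/
def IsCantorSet (C : Set ℝ) : Prop :=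
  C.Nonempty ∧ IsCompact C ∧ Perfect C ∧ interior C = ∅

/-- A Cantorval: a nonempty compact set equal to the closure of its interior such that
both endpoints of every nontrivial connected component are accumulation points of
trivial (one-point) components. -/
def IsCantorval (P : Set ℝ) : Prop :=
  P.Nonempty ∧ IsCompact P ∧ P = closure (interior P) ∧
  ∀ x ∈ P, (connectedComponentIn P x).Nontrivial →
    ∀ y ∈ ({sInf (connectedComponentIn P x), sSup (connectedComponentIn P x)} : Set ℝ),
      ∀ ε > 0, ∃ z ∈ P, z ≠ y ∧ |z - y| < ε ∧ connectedComponentIn P z = {z}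

/-- If (a_n) is nonincreasing, interval-filling and (1+√3)·a_n ≤ r_n
for all n, then both the odd- and even-indexed subsequences are interval-filling:
a_n ≤ a_{n+2} + a_{n+4} + ⋯ for all n. -/
theorem stmt_19 (a : ℕ → ℝ) (hpos : ∀ n, 0 < a n) (hmono : Antitone a)
    (hsum : Summable a) (hIF : ∀ n, a n ≤ tail a (n + 1))
    (h : ∀ n, (1 + Real.sqrt 3) * a n ≤ tail a (n + 1)) :
    ∀ n, a n ≤ ∑' i : ℕ, a (n + 2 * (i + 1)) := by
  -- summability of arithmetic subsequences
  have sE : ∀ m : ℕ, Summable (fun i : ℕ => a (m + 2 * (i + 1))) := by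
    intro m
    have : Function.Injective (fun i : ℕ => m + 2 * (i + 1)) := by
      intro i j hij; simp only at hij; omega
    exact hsum.comp_injective this
  -- tail recurrence
  have trec : ∀ m : ℕ, tail a m = a m + tail a (m + 1) := by
    intro m
    have hsm : Summable (fun i : ℕ => a (m + i)) :=
      hsum.comp_injective (add_right_injective m)
    rw [tail, Summable.tsum_eq_zero_add hsm]
    simp only [add_zero]
    rw [tail]
    congr 1
    exact tsum_congr fun i => by congr 1; omega
  -- splitting a tail into even and odd parts
  have key : ∀ m : ℕ, tail a (m + 2) =
      (∑' i : ℕ, a (m + 2 * (i + 1))) + ∑' i : ℕ, a (m + 1 + 2 * (i + 1)) := by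
    intro m
    have he : Summable (fun k : ℕ => a (m + 2 + 2 * k)) := by
      have : Function.Injective (fun i : ℕ => m + 2 + 2 * i) := by
        intro i j hij; simp only at hij; omega
      exact hsum.comp_injective this
    have ho : Summable (fun k : ℕ => a (m + 2 + (2 * k + 1))) := by
      have : Function.Injective (fun i : ℕ => m + 2 + (2 * i + 1)) := by
        intro i j hij; simp only at hij; omega
      exact hsum.comp_injective this
    have hsplit := tsum_even_add_odd (f := fun i : ℕ => a (m + 2 + i)) he ho
    rw [tail, ← hsplit]
    congr 1
    · exact tsum_congr fun i => by norm_num; ring_nf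
    · exact tsum_congr fun i => by norm_num; ring_nf
  intro n
  by_contra hc
  push_neg at hc
  set s := Real.sqrt 3 with hs
  have hs2 : s ^ 2 = 3 := Real.sq_sqrt (by norm_num)
  have hs0 : 0 < s := Real.sqrt_pos.mpr (by norm_num)
  have hk : tail a (n + 1 + 1) =
      (∑' i : ℕ, a (n + 2 * (i + 1))) + ∑' i : ℕ, a (n + 1 + 2 * (i + 1)) := key n
  have h1 := h n
  rw [trec (n + 1), hk] at h1
  have h2 := h (n + 1)
  rw [hk] at h2
  have hFE : (∑' i : ℕ, a (n + 1 + 2 * (i + 1))) ≤ ∑' i : ℕ, a (n + 2 * (i + 1)) :=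
    Summable.tsum_le_tsum (fun i => hmono (by omega)) (sE (n + 1)) (sE n)
  -- now the numeric contradiction
  have hy : (s - 1) * a n < a (n + 1) := by linarith
  have h2' : (1 + s) * a (n + 1) < 2 * a n := by linarith
  have hss : (1 + s) * (s - 1) = 2 := by
    have : (1 + s) * (s - 1) = s ^ 2 - 1 := by ring
    rw [this, hs2]; norm_num
  have : (2 : ℝ) * a n < 2 * a n := by
    calc (2 : ℝ) * a n = ((1 + s) * (s - 1)) * a n := by rw [hss]
      _ = (1 + s) * ((s - 1) * a n) := by ring
      _ < (1 + s) * a (n + 1) := by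
          exact mul_lt_mul_of_pos_left hy (by linarith)
      _ < 2 * a n := h2'
  exact lt_irrefl _ this
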